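/- The integral over ℝ⁴ computing the second Chern number of the charge-one abelian instanton equals one: ∫_{ℝ⁴} 1/(‖x‖²·(1 + ‖x‖²)³) dx = π²/2 (with respect to four-dimensional Lebesgue measure). -/

import Mathlib

open MeasureTheory

open Metric Set Filter Topology in
private lemma aux_1d_instanton : ∫ y in Ioi (0:ℝ), y / (1 + y^2)^3 = 1/4 := by
  have hd : ∀ x : ℝ, HasDerivAt (fun x:ℝ => 4*(1+x^2)^2) (16*x*(1+x^2)) x := by
    intro x
    have h1 : HasDerivAt (fun x:ℝ => x^2) (2*x) x := by simpa using hasDerivAt_pow 2 x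
    have h3 := ((h1.const_add 1).pow 2).const_mul 4
    refine h3.congr_deriv ?_; push_cast; ring
  have h : ∀ x ∈ Ici (0:ℝ), HasDerivAt (fun x : ℝ => -(4*(1+x^2)^2)⁻¹) (x / (1+x^2)^3) x := by
    intro x _
    have := ((hd x).inv (by positivity)).neg
    refine this.congr_deriv ?_
    field_simp
    ring
  have htop : Tendsto (fun x:ℝ => 4*(1+x^2)^2) atTop atTop :=
    tendsto_atTop_mono (fun x => show id x ≤ _ by
      simp only [id]; nlinarith [sq_nonneg (4*x-1), sq_nonneg (x^2)]) tendsto_id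
  have hlim : Tendsto (fun x : ℝ => -(4*(1+x^2)^2)⁻¹) atTop (𝓝 0) := by
    simpa using htop.inv_tendsto_atTop.neg
  have := integral_Ioi_of_hasDerivAt_of_nonneg' (a := 0) h (fun x hx => by
    have := le_of_lt (mem_Ioi.mp hx); positivity) hlim
  rw [this]; norm_num

open Metric Set in
/-- The second Chern number integral of the charge-one abelian instanton:
`∫_{ℝ⁴} 1/(‖x‖²(1+‖x‖²)³) dx = π²/2`. -/
theorem charge_one_instanton_action :
    ∫ x : EuclideanSpace ℝ (Fin 4), 1 / (‖x‖ ^ 2 * (1 + ‖x‖ ^ 2) ^ 3)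
      = Real.pi ^ 2 / 2 := by
  rw [integral_fun_norm_addHaar (volume : Measure (EuclideanSpace ℝ (Fin 4)))
    (fun r => 1 / (r ^ 2 * (1 + r ^ 2) ^ 3))]
  have hdim : Module.finrank ℝ (EuclideanSpace ℝ (Fin 4)) = 4 := by
    simp [finrank_euclideanSpace]
  rw [hdim]
  have hball : (volume (ball (0:EuclideanSpace ℝ (Fin 4)) 1)).toReal = Real.pi^2/2 := by
    rw [EuclideanSpace.volume_ball]
    simp [Fintype.card_fin]
    rw [show (4:ℝ)/2+1 = 2+1 by norm_num, Real.Gamma_add_one (by norm_num), Real.Gamma_two,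
      show (4:ℕ) = 2*2 by norm_num, pow_mul, Real.sq_sqrt Real.pi_pos.le,
      ENNReal.toReal_ofReal (by positivity)]
    ring
  rw [measureReal_def, hball]
  have : ∫ y in Ioi (0:ℝ), y ^ (4-1) • (1 / (y ^ 2 * (1 + y ^ 2) ^ 3))
      = ∫ y in Ioi (0:ℝ), y / (1 + y^2)^3 := by
    apply setIntegral_congr_fun measurableSet_Ioi
    intro y hy
    have hy' : (0:ℝ) < y := hy
    simp only [smul_eq_mul, show (4:ℕ) - 1 = 3 from rfl]
    field_simp
  rw [this, aux_1d_instanton]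
  simp
  ring
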